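/- Let κ be an infinite cardinal and let T = {T_i : i < κ} be an indexed family of forests without isolated vertices, each with exactly κ components, each component of order at most κ. If G is a κ-regular connected graph, then G has a T-factorization: a family {G_i : i < κ} of pairwise edge-disjoint spanning subgraphs of G with G_i isomorphic to T_i for all i < κ and ∪_{i<κ} E(G_i) = E(G). -/

import Mathlib

open Cardinal

universe u

/-- `G` is `κ`-regular: every vertex has degree (neighbourhood cardinality) exactly `κ`. -/
def SimpleGraph.CardRegular {V : Type u} (G : SimpleGraph V) (κ : Cardinal.{u}) : Prop :=
  ∀ v : V, #(G.neighborSet v) = κ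

/-- `G` has no isolated vertices. -/
def SimpleGraph.NoIsolatedVerts {V : Type u} (G : SimpleGraph V) : Prop :=
  ∀ v : V, ∃ w : V, G.Adj v w

/-- A factorization of `G`: a family of spanning subgraphs, pairwise edge-disjoint,
whose edge sets cover `E(G)`. -/
def SimpleGraph.IsFactorization {V : Type u} {ι : Type u} (G : SimpleGraph V)
    (F : ι → SimpleGraph V) : Prop :=
  (∀ i, F i ≤ G) ∧ (Pairwise fun i j => Disjoint (F i).edgeSet (F j).edgeSet) ∧
    (⋃ i, (F i).edgeSet) = G.edgeSet

/-- In the forest `F` rooted at `v₀`, `u` is a child of `w`. -/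
def SimpleGraph.IsChild {V : Type u} (F : SimpleGraph V) (v₀ u w : V) : Prop :=
  F.Adj w u ∧ F.Reachable v₀ u ∧ F.dist v₀ u = F.dist v₀ w + 1

/-- The graph with edges `v_j v_i` for `v_i ∈ C j`, `j < i`. -/
def childGraph {V I : Type u} [LT I] (v : I ≃ V) (C : I → Set V) : SimpleGraph V :=
  SimpleGraph.fromEdgeSet {e | ∃ i j : I, j < i ∧ (v i : V) ∈ C j ∧ e = s(v j, v i)}

/-- Disjoint union of `ι`-many copies of `T`. -/
def copiesGraph (ι : Type u) {W : Type u} (T : SimpleGraph W) : SimpleGraph (ι × W) where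
  Adj p q := p.1 = q.1 ∧ T.Adj p.2 q.2
  symm := by constructor; rintro p q ⟨h1, h2⟩; exact ⟨h1.symm, h2.symm⟩
  loopless := by constructor; rintro p ⟨-, h⟩; exact T.loopless.irrefl _ h

namespace Fact5


open SimpleGraph Set

variable {V I : Type u} {W : I → Type u}

/-- A state: set of placements `((i, w), v)` meaning vertex `w` of forest `i` is hosted at `v`. -/
abbrev PSt (I : Type u) (W : I → Type u) (V : Type u) : Type u := Set ((Σ i : I, W i) × V)

variable (T : ∀ i, SimpleGraph (W i)) (G : SimpleGraph V)

def pdom (S : PSt I W V) : Set (Σ i : I, W i) := {p | ∃ v, (p, v) ∈ S}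

def pim (S : PSt I W V) (i : I) : Set V := {v | ∃ w : W i, ((⟨i, w⟩ : Σ i, W i), v) ∈ S}

def eOf (S : PSt I W V) (i : I) : Set (Sym2 V) :=
  {e | ∃ w w' v v', (T i).Adj w w' ∧ ((⟨i, w⟩ : Σ i, W i), v) ∈ S ∧
    ((⟨i, w'⟩ : Σ i, W i), v') ∈ S ∧ e = s(v, v')}

structure GoodS (S : PSt I W V) : Prop where
  func : ∀ {i : I} {w : W i} {v v' : V}, ((⟨i, w⟩ : Σ i, W i), v) ∈ S →
    ((⟨i, w⟩ : Σ i, W i), v') ∈ S → v = v'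
  inj : ∀ {i : I} {w w' : W i} {v : V}, ((⟨i, w⟩ : Σ i, W i), v) ∈ S →
    ((⟨i, w'⟩ : Σ i, W i), v) ∈ S → w = w'
  adjP : ∀ {i : I} {w w' : W i} {v v' : V}, (T i).Adj w w' → ((⟨i, w⟩ : Σ i, W i), v) ∈ S →
    ((⟨i, w'⟩ : Σ i, W i), v') ∈ S → G.Adj v v'
  conn : ∀ {i : I} {w w' : W i} {v v' : V}, ((⟨i, w⟩ : Σ i, W i), v) ∈ S →
    ((⟨i, w'⟩ : Σ i, W i), v') ∈ S → (T i).Reachable w w' →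
    ∃ p : (T i).Walk w w', ∀ x ∈ p.support, (⟨i, x⟩ : Σ i, W i) ∈ pdom S
  disj : ∀ {i j : I}, i ≠ j → ∀ e, e ∈ eOf T S i → e ∉ eOf T S j

theorem goodS_empty : GoodS T G (∅ : PSt I W V) := by
  constructor <;> intros <;> simp_all [eOf]

theorem pdom_mono {S S' : PSt I W V} (h : S ⊆ S') : pdom S ⊆ pdom S' := by
  rintro p ⟨v, hv⟩; exact ⟨v, h hv⟩

theorem pim_mono {S S' : PSt I W V} (h : S ⊆ S') (i : I) : pim S i ⊆ pim S' i := by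
  rintro v ⟨w, hw⟩; exact ⟨w, h hw⟩

theorem eOf_mono {S S' : PSt I W V} (h : S ⊆ S') (i : I) : eOf T S i ⊆ eOf T S' i := by
  rintro e ⟨w, w', v, v', ha, h1, h2, he⟩; exact ⟨w, w', v, v', ha, h h1, h h2, he⟩

theorem goodS_iUnion {ι : Sort*} (f : ι → PSt I W V)
    (hdir : ∀ a b : ι, ∃ c, f a ⊆ f c ∧ f b ⊆ f c)
    (hg : ∀ a, GoodS T G (f a)) : GoodS T G (⋃ a, f a) := by
  have mem2 : ∀ {x y : (Σ i : I, W i) × V}, x ∈ ⋃ a, f a → y ∈ ⋃ a, f a →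
      ∃ c, x ∈ f c ∧ y ∈ f c := by
    intro x y hx hy
    obtain ⟨a, ha⟩ := Set.mem_iUnion.1 hx
    obtain ⟨b, hb⟩ := Set.mem_iUnion.1 hy
    obtain ⟨c, hac, hbc⟩ := hdir a b
    exact ⟨c, hac ha, hbc hb⟩
  have eOf2 : ∀ {i : I} {e}, e ∈ eOf T (⋃ a, f a) i → ∃ c, e ∈ eOf T (f c) i := by
    rintro i e ⟨w, w', v, v', ha, h1, h2, he⟩
    obtain ⟨c, hc1, hc2⟩ := mem2 h1 h2
    exact ⟨c, w, w', v, v', ha, hc1, hc2, he⟩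
  constructor
  · intro i w v v' h1 h2
    obtain ⟨c, h1, h2⟩ := mem2 h1 h2
    exact (hg c).func h1 h2
  · intro i w w' v h1 h2
    obtain ⟨c, h1, h2⟩ := mem2 h1 h2
    exact (hg c).inj h1 h2
  · intro i w w' v v' ha h1 h2
    obtain ⟨c, h1, h2⟩ := mem2 h1 h2
    exact (hg c).adjP ha h1 h2
  · intro i w w' v v' h1 h2 hr
    obtain ⟨c, h1, h2⟩ := mem2 h1 h2
    obtain ⟨p, hp⟩ := (hg c).conn h1 h2 hr
    exact ⟨p, fun x hx => pdom_mono (Set.subset_iUnion f c) (hp x hx)⟩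
  · intro i j hij e he1 he2
    obtain ⟨c1, hc1⟩ := eOf2 he1
    obtain ⟨c2, hc2⟩ := eOf2 he2
    obtain ⟨c, h1, h2⟩ := hdir c1 c2
    exact (hg c).disj hij e (eOf_mono T h1 i hc1) (eOf_mono T h2 j hc2)

/-- Requirements. -/
inductive Req (I : Type u) (W : I → Type u) (V : Type u) : Type u
  | edge (u v : V)
  | cover (i : I) (v : V)
  | place (i : I) (t : W i)

/-- Postcondition after processing a requirement: `S` is the old state, `S'` the new one. -/
def Post (S S' : PSt I W V) : Req I W V → Prop
  | .edge u v => G.Adj u v → ∃ i, s(u, v) ∈ eOf T S' i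
  | .cover i v => v ∈ pim S' i
  | .place i t => ((⟨i, t⟩ : Σ i, W i) ∈ pdom S') ∨
      ∃ w : W i, (T i).Reachable w t ∧ (⟨i, w⟩ : Σ i, W i) ∈ pdom S' ∧
        ∀ w' : W i, (⟨i, w'⟩ : Σ i, W i) ∈ pdom S → (T i).Reachable w' t →
          (T i).dist w t < (T i).dist w' t

def Ext (S : PSt I W V) (r : Req I W V) (X : PSt I W V) : Prop :=
  X.Finite ∧ GoodS T G (S ∪ X) ∧ Post T G S (S ∪ X) r

theorem unique_nbr {S : PSt I W V} (hS : GoodS T G S) {i : I} (hac : (T i).IsAcyclic)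
    {w w₁ w₂ : W i} {v₁ v₂ : V} (hw : (⟨i, w⟩ : Σ i, W i) ∉ pdom S)
    (h1 : ((⟨i, w₁⟩ : Σ i, W i), v₁) ∈ S) (h2 : ((⟨i, w₂⟩ : Σ i, W i), v₂) ∈ S)
    (a1 : (T i).Adj w w₁) (a2 : (T i).Adj w w₂) : w₁ = w₂ := by
  classical
  by_contra hne
  have hr : (T i).Reachable w₁ w₂ := (a1.symm.reachable).trans a2.reachable
  obtain ⟨p, hp⟩ := hS.conn h1 h2 hr
  have hqsub : ∀ x ∈ p.toPath.1.support, (⟨i, x⟩ : Σ i, W i) ∈ pdom S :=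
    fun x hx => hp x (SimpleGraph.Walk.support_toPath_subset p hx)
  have hwns : w ∉ p.toPath.1.support := fun hx => hw (hqsub w hx)
  have key := (SimpleGraph.isAcyclic_iff_path_unique.1 hac)
    ⟨SimpleGraph.Walk.cons a1 p.toPath.1, (p.toPath.2).cons hwns⟩
    (SimpleGraph.Path.singleton a2)
  have hval : SimpleGraph.Walk.cons a1 p.toPath.1 = (SimpleGraph.Path.singleton a2).1 :=
    congrArg Subtype.val key
  have hmem : w₁ ∈ (SimpleGraph.Walk.cons a1 p.toPath.1).support := by
    simp [SimpleGraph.Walk.support_cons]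
  rw [hval] at hmem
  simp only [SimpleGraph.Path.singleton, SimpleGraph.Walk.support_cons,
    SimpleGraph.Walk.support_nil, List.mem_cons, List.mem_singleton] at hmem
  rcases hmem with h | h | h
  · exact hw (h ▸ ⟨v₁, h1⟩)
  · exact hne h
  · simp at h

/-- Decoding equality of placements. -/
theorem plc_eq {i i' : I} {w : W i} {w' : W i'} {v v' : V}
    (h : ((⟨i, w⟩ : Σ i, W i), v) = ((⟨i', w'⟩ : Σ i, W i), v')) :
    i = i' ∧ HEq w w' ∧ v = v' := by
  injection h with h1 h2
  injection h1 with h3 h4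
  exact ⟨h3, h4, h2⟩

theorem eOf_seed {S : PSt I W V} {i : I} {t : W i} {v : V}
    (ht : ∀ w : W i, (T i).Reachable w t → (⟨i, w⟩ : Σ i, W i) ∉ pdom S) (j : I) :
    eOf T (S ∪ {((⟨i, t⟩ : Σ i, W i), v)}) j = eOf T S j := by
  refine le_antisymm ?_ (eOf_mono T Set.subset_union_left j)
  rintro e ⟨w, w', v1, v1', ha, h1, h2, he⟩
  rcases h1 with h1 | h1
  · rcases h2 with h2 | h2
    · exact ⟨w, w', v1, v1', ha, h1, h2, he⟩
    · obtain ⟨rfl, hw, rfl⟩ := plc_eq h2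
      obtain rfl := eq_of_heq hw
      exact absurd ⟨v1, h1⟩ (ht w ha.reachable)
  · obtain ⟨rfl, hw, rfl⟩ := plc_eq h1
    obtain rfl := eq_of_heq hw
    rcases h2 with h2 | h2
    · exact absurd ⟨v1', h2⟩ (ht w' ha.symm.reachable)
    · obtain ⟨-, hw2, -⟩ := plc_eq h2
      obtain rfl := eq_of_heq hw2
      exact absurd ha ((T _).loopless.irrefl _)
theorem good_seed {S : PSt I W V} (hS : GoodS T G S) {i : I} {t : W i} {v : V}
    (ht : ∀ w : W i, (T i).Reachable w t → (⟨i, w⟩ : Σ i, W i) ∉ pdom S)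
    (hv : v ∉ pim S i) : GoodS T G (S ∪ {((⟨i, t⟩ : Σ i, W i), v)}) := by
  have htd : (⟨i, t⟩ : Σ i, W i) ∉ pdom S := ht t (SimpleGraph.Reachable.refl t)
  constructor
  · intro i0 w0 v0 v0' h1 h2
    rcases h1 with h1 | h1 <;> rcases h2 with h2 | h2
    · exact hS.func h1 h2
    · obtain ⟨rfl, hw, rfl⟩ := plc_eq h2; obtain rfl := eq_of_heq hw
      exact (htd ⟨v0, h1⟩).elim
    · obtain ⟨rfl, hw, rfl⟩ := plc_eq h1; obtain rfl := eq_of_heq hw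
      exact (htd ⟨v0', h2⟩).elim
    · obtain ⟨rfl, hw, rfl⟩ := plc_eq h1; obtain ⟨-, -, h⟩ := plc_eq h2; exact h.symm ▸ rfl
  · intro i0 w0 w0' v0 h1 h2
    rcases h1 with h1 | h1 <;> rcases h2 with h2 | h2
    · exact hS.inj h1 h2
    · obtain ⟨rfl, hw, rfl⟩ := plc_eq h2; obtain rfl := eq_of_heq hw
      exact (hv ⟨w0, h1⟩).elim
    · obtain ⟨rfl, hw, rfl⟩ := plc_eq h1; obtain rfl := eq_of_heq hw
      exact (hv ⟨w0', h2⟩).elim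
    · obtain ⟨rfl, hw, rfl⟩ := plc_eq h1; obtain rfl := eq_of_heq hw
      obtain ⟨-, hw2, -⟩ := plc_eq h2; exact (eq_of_heq hw2).symm
  · intro i0 w0 w0' v0 v0' ha h1 h2
    rcases h1 with h1 | h1 <;> rcases h2 with h2 | h2
    · exact hS.adjP ha h1 h2
    · obtain ⟨rfl, hw, rfl⟩ := plc_eq h2; obtain rfl := eq_of_heq hw
      exact absurd ⟨v0, h1⟩ (ht w0 ha.reachable)
    · obtain ⟨rfl, hw, rfl⟩ := plc_eq h1; obtain rfl := eq_of_heq hw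
      exact absurd ⟨v0', h2⟩ (ht w0' ha.symm.reachable)
    · obtain ⟨rfl, hw, rfl⟩ := plc_eq h1; obtain rfl := eq_of_heq hw
      obtain ⟨-, hw2, -⟩ := plc_eq h2; obtain rfl := eq_of_heq hw2
      exact absurd ha ((T _).loopless.irrefl _)
  · intro i0 w0 w0' v0 v0' h1 h2 hr
    rcases h1 with h1 | h1 <;> rcases h2 with h2 | h2
    · obtain ⟨p, hp⟩ := hS.conn h1 h2 hr
      exact ⟨p, fun x hx => pdom_mono Set.subset_union_left (hp x hx)⟩
    · obtain ⟨rfl, hw, rfl⟩ := plc_eq h2; obtain rfl := eq_of_heq hw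
      exact absurd ⟨v0, h1⟩ (ht w0 hr)
    · obtain ⟨rfl, hw, rfl⟩ := plc_eq h1; obtain rfl := eq_of_heq hw
      exact absurd ⟨v0', h2⟩ (ht w0' hr.symm)
    · obtain ⟨rfl, hw, rfl⟩ := plc_eq h1; obtain rfl := eq_of_heq hw
      obtain ⟨-, hw2, -⟩ := plc_eq h2; obtain rfl := eq_of_heq hw2
      exact ⟨SimpleGraph.Walk.nil, by
        intro x hx
        simp only [SimpleGraph.Walk.support_nil, List.mem_singleton] at hx
        exact ⟨v0, Or.inr (by subst hx; rfl)⟩⟩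
  · intro i0 j hij e he1 he2
    rw [eOf_seed T ht] at he1 he2
    exact hS.disj hij e he1 he2

theorem eOf_ne {S : PSt I W V} {i j : I} {t : W i} {v : V} (hij : j ≠ i) :
    eOf T (S ∪ {((⟨i, t⟩ : Σ i, W i), v)}) j = eOf T S j := by
  refine le_antisymm ?_ (eOf_mono T Set.subset_union_left j)
  rintro e ⟨w, w', v1, v1', ha, h1, h2, he⟩
  rcases h1 with h1 | h1
  · rcases h2 with h2 | h2
    · exact ⟨w, w', v1, v1', ha, h1, h2, he⟩
    · exact absurd (plc_eq h2).1 hij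
  · exact absurd (plc_eq h1).1 hij

theorem eOf_ne2 {S : PSt I W V} {i j : I} {t t' : W i} {u v : V} (hij : j ≠ i) :
    eOf T (S ∪ {((⟨i, t⟩ : Σ i, W i), u), ((⟨i, t'⟩ : Σ i, W i), v)}) j = eOf T S j := by
  refine le_antisymm ?_ (eOf_mono T Set.subset_union_left j)
  rintro e ⟨w, w', v1, v1', ha, h1, h2, he⟩
  rcases h1 with h1 | h1 | h1
  · rcases h2 with h2 | h2 | h2
    · exact ⟨w, w', v1, v1', ha, h1, h2, he⟩
    · exact absurd (plc_eq h2).1 hij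
    · exact absurd (plc_eq h2).1 hij
  · exact absurd (plc_eq h1).1 hij
  · exact absurd (plc_eq h1).1 hij

theorem good_seed2 {S : PSt I W V} (hS : GoodS T G S) {i : I} {t t' : W i} {u v : V}
    (hadj : (T i).Adj t t')
    (ht : ∀ w : W i, (T i).Reachable w t → (⟨i, w⟩ : Σ i, W i) ∉ pdom S)
    (hu : u ∉ pim S i) (hv : v ∉ pim S i) (huv : G.Adj u v)
    (he : ∀ j, s(u, v) ∉ eOf T S j) :
    GoodS T G (S ∪ {((⟨i, t⟩ : Σ i, W i), u), ((⟨i, t'⟩ : Σ i, W i), v)}) := by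
  have ht' : ∀ w : W i, (T i).Reachable w t' → (⟨i, w⟩ : Σ i, W i) ∉ pdom S :=
    fun w h => ht w (h.trans hadj.symm.reachable)
  have htne : t ≠ t' := hadj.ne
  have hSub : S ⊆ S ∪ {((⟨i, t⟩ : Σ i, W i), u), ((⟨i, t'⟩ : Σ i, W i), v)} :=
    Set.subset_union_left
  have hmt : ((⟨i, t⟩ : Σ i, W i), u) ∈
      S ∪ {((⟨i, t⟩ : Σ i, W i), u), ((⟨i, t'⟩ : Σ i, W i), v)} := Or.inr (Or.inl rfl)
  have hmt' : ((⟨i, t'⟩ : Σ i, W i), v) ∈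
      S ∪ {((⟨i, t⟩ : Σ i, W i), u), ((⟨i, t'⟩ : Σ i, W i), v)} := Or.inr (Or.inr rfl)
  have hBoth : eOf T (S ∪ {((⟨i, t⟩ : Σ i, W i), u), ((⟨i, t'⟩ : Σ i, W i), v)}) i ⊆
      eOf T S i ∪ {s(u, v)} := by
    rintro e ⟨w1, w1', v1, v1', ha, h1, h2, hee⟩
    rcases h1 with h1 | h1 | h1
    · rcases h2 with h2 | h2 | h2
      · exact Or.inl ⟨w1, w1', v1, v1', ha, h1, h2, hee⟩
      · obtain ⟨-, hq, rfl⟩ := plc_eq h2; obtain rfl := eq_of_heq hq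
        exact (ht w1 ha.reachable ⟨v1, h1⟩).elim
      · obtain ⟨-, hq, rfl⟩ := plc_eq h2; obtain rfl := eq_of_heq hq
        exact (ht' w1 ha.reachable ⟨v1, h1⟩).elim
    · obtain ⟨-, hq, rfl⟩ := plc_eq h1; obtain rfl := eq_of_heq hq
      rcases h2 with h2 | h2 | h2
      · exact (ht w1' ha.symm.reachable ⟨v1', h2⟩).elim
      · obtain ⟨-, hq2, rfl⟩ := plc_eq h2; obtain rfl := eq_of_heq hq2
        exact absurd ha ((T _).loopless.irrefl _)
      · obtain ⟨-, hq2, rfl⟩ := plc_eq h2; obtain rfl := eq_of_heq hq2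
        exact Or.inr (by simp [hee])
    · obtain ⟨-, hq, rfl⟩ := plc_eq h1; obtain rfl := eq_of_heq hq
      rcases h2 with h2 | h2 | h2
      · exact (ht' w1' ha.symm.reachable ⟨v1', h2⟩).elim
      · obtain ⟨-, hq2, rfl⟩ := plc_eq h2; obtain rfl := eq_of_heq hq2
        exact Or.inr (by simp [hee, Sym2.eq_swap])
      · obtain ⟨-, hq2, rfl⟩ := plc_eq h2; obtain rfl := eq_of_heq hq2
        exact absurd ha ((T _).loopless.irrefl _)
  constructor
  · intro i0 w0 v0 v0' h1 h2
    rcases h1 with h1 | h1 | h1 <;> rcases h2 with h2 | h2 | h2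
    · exact hS.func h1 h2
    · obtain ⟨rfl, hq, rfl⟩ := plc_eq h2; obtain rfl := eq_of_heq hq
      exact (ht _ (SimpleGraph.Reachable.refl _) ⟨v0, h1⟩).elim
    · obtain ⟨rfl, hq, rfl⟩ := plc_eq h2; obtain rfl := eq_of_heq hq
      exact (ht' _ (SimpleGraph.Reachable.refl _) ⟨v0, h1⟩).elim
    · obtain ⟨rfl, hq, rfl⟩ := plc_eq h1; obtain rfl := eq_of_heq hq
      exact (ht _ (SimpleGraph.Reachable.refl _) ⟨v0', h2⟩).elim
    · obtain ⟨rfl, hq, rfl⟩ := plc_eq h1; obtain rfl := eq_of_heq hq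
      obtain ⟨-, -, rfl⟩ := plc_eq h2; rfl
    · obtain ⟨rfl, hq, rfl⟩ := plc_eq h1; obtain rfl := eq_of_heq hq
      obtain ⟨-, hq2, -⟩ := plc_eq h2
      exact absurd (eq_of_heq hq2) htne
    · obtain ⟨rfl, hq, rfl⟩ := plc_eq h1; obtain rfl := eq_of_heq hq
      exact (ht' _ (SimpleGraph.Reachable.refl _) ⟨v0', h2⟩).elim
    · obtain ⟨rfl, hq, rfl⟩ := plc_eq h1; obtain rfl := eq_of_heq hq
      obtain ⟨-, hq2, -⟩ := plc_eq h2
      exact absurd (eq_of_heq hq2).symm htne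
    · obtain ⟨rfl, hq, rfl⟩ := plc_eq h1; obtain rfl := eq_of_heq hq
      obtain ⟨-, -, rfl⟩ := plc_eq h2; rfl
  · intro i0 w0 w0' v0 h1 h2
    rcases h1 with h1 | h1 | h1 <;> rcases h2 with h2 | h2 | h2
    · exact hS.inj h1 h2
    · obtain ⟨rfl, hq, rfl⟩ := plc_eq h2; exact (hu ⟨w0, h1⟩).elim
    · obtain ⟨rfl, hq, rfl⟩ := plc_eq h2; exact (hv ⟨w0, h1⟩).elim
    · obtain ⟨rfl, hq, rfl⟩ := plc_eq h1; exact (hu ⟨w0', h2⟩).elim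
    · obtain ⟨rfl, hq, rfl⟩ := plc_eq h1; obtain rfl := eq_of_heq hq
      obtain ⟨-, hq2, -⟩ := plc_eq h2; exact (eq_of_heq hq2).symm
    · obtain ⟨rfl, hq, rfl⟩ := plc_eq h1
      obtain ⟨-, -, hv2⟩ := plc_eq h2; exact absurd hv2.symm huv.ne.symm
    · obtain ⟨rfl, hq, rfl⟩ := plc_eq h1; exact (hv ⟨w0', h2⟩).elim
    · obtain ⟨rfl, hq, rfl⟩ := plc_eq h1
      obtain ⟨-, -, hv2⟩ := plc_eq h2; exact absurd hv2 huv.ne.symm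
    · obtain ⟨rfl, hq, rfl⟩ := plc_eq h1; obtain rfl := eq_of_heq hq
      obtain ⟨-, hq2, -⟩ := plc_eq h2; exact (eq_of_heq hq2).symm
  · intro i0 w0 w0' v0 v0' ha h1 h2
    rcases h1 with h1 | h1 | h1 <;> rcases h2 with h2 | h2 | h2
    · exact hS.adjP ha h1 h2
    · obtain ⟨rfl, hq, rfl⟩ := plc_eq h2; obtain rfl := eq_of_heq hq
      exact (ht w0 ha.reachable ⟨v0, h1⟩).elim
    · obtain ⟨rfl, hq, rfl⟩ := plc_eq h2; obtain rfl := eq_of_heq hq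
      exact (ht' w0 ha.reachable ⟨v0, h1⟩).elim
    · obtain ⟨rfl, hq, rfl⟩ := plc_eq h1; obtain rfl := eq_of_heq hq
      exact (ht w0' ha.symm.reachable ⟨v0', h2⟩).elim
    · obtain ⟨rfl, hq, rfl⟩ := plc_eq h1; obtain rfl := eq_of_heq hq
      obtain ⟨-, hq2, -⟩ := plc_eq h2; obtain rfl := eq_of_heq hq2
      exact absurd ha ((T _).loopless.irrefl _)
    · obtain ⟨rfl, hq, rfl⟩ := plc_eq h1; obtain rfl := eq_of_heq hq
      obtain ⟨-, hq2, rfl⟩ := plc_eq h2; obtain rfl := eq_of_heq hq2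
      exact huv
    · obtain ⟨rfl, hq, rfl⟩ := plc_eq h1; obtain rfl := eq_of_heq hq
      exact (ht' w0' ha.symm.reachable ⟨v0', h2⟩).elim
    · obtain ⟨rfl, hq, rfl⟩ := plc_eq h1; obtain rfl := eq_of_heq hq
      obtain ⟨-, hq2, rfl⟩ := plc_eq h2; obtain rfl := eq_of_heq hq2
      exact huv.symm
    · obtain ⟨rfl, hq, rfl⟩ := plc_eq h1; obtain rfl := eq_of_heq hq
      obtain ⟨-, hq2, -⟩ := plc_eq h2; obtain rfl := eq_of_heq hq2
      exact absurd ha ((T _).loopless.irrefl _)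
  · intro i0 w0 w0' v0 v0' h1 h2 hr
    rcases h1 with h1 | h1 | h1 <;> rcases h2 with h2 | h2 | h2
    · obtain ⟨p, hp⟩ := hS.conn h1 h2 hr
      exact ⟨p, fun x hx => pdom_mono hSub (hp x hx)⟩
    · obtain ⟨rfl, hq, rfl⟩ := plc_eq h2; obtain rfl := eq_of_heq hq
      exact (ht w0 hr ⟨v0, h1⟩).elim
    · obtain ⟨rfl, hq, rfl⟩ := plc_eq h2; obtain rfl := eq_of_heq hq
      exact (ht' w0 hr ⟨v0, h1⟩).elim
    · obtain ⟨rfl, hq, rfl⟩ := plc_eq h1; obtain rfl := eq_of_heq hq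
      exact (ht w0' hr.symm ⟨v0', h2⟩).elim
    · obtain ⟨rfl, hq, rfl⟩ := plc_eq h1; obtain rfl := eq_of_heq hq
      obtain ⟨-, hq2, -⟩ := plc_eq h2; obtain rfl := eq_of_heq hq2
      refine ⟨SimpleGraph.Walk.nil, ?_⟩
      intro x hx
      simp only [SimpleGraph.Walk.support_nil, List.mem_singleton] at hx
      exact ⟨_, by subst hx; exact hmt⟩
    · obtain ⟨rfl, hq, rfl⟩ := plc_eq h1; obtain rfl := eq_of_heq hq
      obtain ⟨-, hq2, -⟩ := plc_eq h2; obtain rfl := eq_of_heq hq2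
      refine ⟨SimpleGraph.Walk.cons hadj SimpleGraph.Walk.nil, ?_⟩
      intro x hx
      simp only [SimpleGraph.Walk.support_cons, SimpleGraph.Walk.support_nil,
        List.mem_cons, List.mem_singleton] at hx
      rcases hx with rfl | rfl | h
      · exact ⟨_, hmt⟩
      · exact ⟨_, hmt'⟩
      · exact absurd h (by simp)
    · obtain ⟨rfl, hq, rfl⟩ := plc_eq h1; obtain rfl := eq_of_heq hq
      exact (ht' w0' hr.symm ⟨v0', h2⟩).elim
    · obtain ⟨rfl, hq, rfl⟩ := plc_eq h1; obtain rfl := eq_of_heq hq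
      obtain ⟨-, hq2, -⟩ := plc_eq h2; obtain rfl := eq_of_heq hq2
      refine ⟨SimpleGraph.Walk.cons hadj.symm SimpleGraph.Walk.nil, ?_⟩
      intro x hx
      simp only [SimpleGraph.Walk.support_cons, SimpleGraph.Walk.support_nil,
        List.mem_cons, List.mem_singleton] at hx
      rcases hx with rfl | rfl | h
      · exact ⟨_, hmt'⟩
      · exact ⟨_, hmt⟩
      · exact absurd h (by simp)
    · obtain ⟨rfl, hq, rfl⟩ := plc_eq h1; obtain rfl := eq_of_heq hq
      obtain ⟨-, hq2, -⟩ := plc_eq h2; obtain rfl := eq_of_heq hq2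
      refine ⟨SimpleGraph.Walk.nil, ?_⟩
      intro x hx
      simp only [SimpleGraph.Walk.support_nil, List.mem_singleton] at hx
      exact ⟨_, by subst hx; exact hmt'⟩
  · intro a b hab e he1 he2
    by_cases hai : a = i
    · subst hai
      have hbne : b ≠ a := hab.symm
      rw [eOf_ne2 T hbne] at he2
      rcases hBoth he1 with h | h
      · exact hS.disj hab e h he2
      · simp only [Set.mem_singleton_iff] at h
        exact he b (h ▸ he2)
    · rw [eOf_ne2 T hai] at he1
      by_cases hbi : b = i
      · subst hbi
        rcases hBoth he2 with h | h
        · exact hS.disj hab e he1 h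
        · simp only [Set.mem_singleton_iff] at h
          exact he a (h ▸ he1)
      · rw [eOf_ne2 T hbi] at he2
        exact hS.disj hab e he1 he2

theorem good_extend {S : PSt I W V} (hS : GoodS T G S) {i : I} (hac : (T i).IsAcyclic)
    {w w' : W i} {v' y : V} (hw : (⟨i, w⟩ : Σ i, W i) ∉ pdom S)
    (h1 : ((⟨i, w'⟩ : Σ i, W i), v') ∈ S) (ha : (T i).Adj w' w)
    (hy : y ∉ pim S i) (hGy : G.Adj v' y) (he : ∀ j, s(v', y) ∉ eOf T S j) :
    GoodS T G (S ∪ {((⟨i, w⟩ : Σ i, W i), y)}) := by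
  have hSub : S ⊆ S ∪ {((⟨i, w⟩ : Σ i, W i), y)} := Set.subset_union_left
  have hmw : ((⟨i, w⟩ : Σ i, W i), y) ∈ S ∪ {((⟨i, w⟩ : Σ i, W i), y)} := Or.inr rfl
  have uniq : ∀ {x : W i} {vx : V}, ((⟨i, x⟩ : Σ i, W i), vx) ∈ S → (T i).Adj w x →
      x = w' ∧ vx = v' := by
    intro x vx hx hax
    have hxw : x = w' := unique_nbr T G hS hac hw hx h1 hax ha.symm
    subst hxw
    exact ⟨rfl, hS.func hx h1⟩
  have hBoth : eOf T (S ∪ {((⟨i, w⟩ : Σ i, W i), y)}) i ⊆ eOf T S i ∪ {s(v', y)} := by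
    rintro e ⟨w1, w1', v1, v1', ha0, hh1, hh2, hee⟩
    rcases hh1 with hh1 | hh1
    · rcases hh2 with hh2 | hh2
      · exact Or.inl ⟨w1, w1', v1, v1', ha0, hh1, hh2, hee⟩
      · obtain ⟨-, hq, rfl⟩ := plc_eq hh2; obtain rfl := eq_of_heq hq
        obtain ⟨rfl, rfl⟩ := uniq hh1 ha0.symm
        exact Or.inr (by simp [hee])
    · obtain ⟨-, hq, rfl⟩ := plc_eq hh1; obtain rfl := eq_of_heq hq
      rcases hh2 with hh2 | hh2
      · obtain ⟨rfl, rfl⟩ := uniq hh2 ha0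
        exact Or.inr (by simp [hee, Sym2.eq_swap])
      · obtain ⟨-, hq2, -⟩ := plc_eq hh2; obtain rfl := eq_of_heq hq2
        exact absurd ha0 ((T _).loopless.irrefl _)
  have connNew : ∀ {x : W i} {vx : V}, ((⟨i, x⟩ : Σ i, W i), vx) ∈ S →
      (T i).Reachable w x → ∃ p : (T i).Walk w x,
        ∀ z ∈ p.support, (⟨i, z⟩ : Σ i, W i) ∈ pdom (S ∪ {((⟨i, w⟩ : Σ i, W i), y)}) := by
    intro x vx hx hr
    have hr' : (T i).Reachable w' x := ha.reachable.trans hr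
    obtain ⟨p, hp⟩ := hS.conn h1 hx hr'
    refine ⟨SimpleGraph.Walk.cons ha.symm p, ?_⟩
    intro z hz
    simp only [SimpleGraph.Walk.support_cons, List.mem_cons] at hz
    rcases hz with rfl | hz
    · exact ⟨y, hmw⟩
    · exact pdom_mono hSub (hp z hz)
  constructor
  · intro i0 w0 v0 v0' hh1 hh2
    rcases hh1 with hh1 | hh1 <;> rcases hh2 with hh2 | hh2
    · exact hS.func hh1 hh2
    · obtain ⟨rfl, hq, rfl⟩ := plc_eq hh2; obtain rfl := eq_of_heq hq
      exact (hw ⟨v0, hh1⟩).elim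
    · obtain ⟨rfl, hq, rfl⟩ := plc_eq hh1; obtain rfl := eq_of_heq hq
      exact (hw ⟨v0', hh2⟩).elim
    · obtain ⟨rfl, hq, rfl⟩ := plc_eq hh1; obtain ⟨-, -, rfl⟩ := plc_eq hh2; rfl
  · intro i0 w0 w0' v0 hh1 hh2
    rcases hh1 with hh1 | hh1 <;> rcases hh2 with hh2 | hh2
    · exact hS.inj hh1 hh2
    · obtain ⟨rfl, hq, rfl⟩ := plc_eq hh2; exact (hy ⟨w0, hh1⟩).elim
    · obtain ⟨rfl, hq, rfl⟩ := plc_eq hh1; exact (hy ⟨w0', hh2⟩).elim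
    · obtain ⟨rfl, hq, rfl⟩ := plc_eq hh1; obtain rfl := eq_of_heq hq
      obtain ⟨-, hq2, -⟩ := plc_eq hh2; exact (eq_of_heq hq2).symm
  · intro i0 w0 w0' v0 v0' ha0 hh1 hh2
    rcases hh1 with hh1 | hh1 <;> rcases hh2 with hh2 | hh2
    · exact hS.adjP ha0 hh1 hh2
    · obtain ⟨rfl, hq, rfl⟩ := plc_eq hh2; obtain rfl := eq_of_heq hq
      obtain ⟨rfl, rfl⟩ := uniq hh1 ha0.symm
      exact hGy
    · obtain ⟨rfl, hq, rfl⟩ := plc_eq hh1; obtain rfl := eq_of_heq hq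
      obtain ⟨rfl, rfl⟩ := uniq hh2 ha0
      exact hGy.symm
    · obtain ⟨rfl, hq, rfl⟩ := plc_eq hh1; obtain rfl := eq_of_heq hq
      obtain ⟨-, hq2, -⟩ := plc_eq hh2; obtain rfl := eq_of_heq hq2
      exact absurd ha0 ((T _).loopless.irrefl _)
  · intro i0 w0 w0' v0 v0' hh1 hh2 hr
    rcases hh1 with hh1 | hh1 <;> rcases hh2 with hh2 | hh2
    · obtain ⟨p, hp⟩ := hS.conn hh1 hh2 hr
      exact ⟨p, fun x hx => pdom_mono hSub (hp x hx)⟩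
    · obtain ⟨rfl, hq, rfl⟩ := plc_eq hh2; obtain rfl := eq_of_heq hq
      obtain ⟨p, hp⟩ := connNew hh1 hr.symm
      exact ⟨p.reverse, fun z hz => hp z (by
        rwa [SimpleGraph.Walk.support_reverse, List.mem_reverse] at hz)⟩
    · obtain ⟨rfl, hq, rfl⟩ := plc_eq hh1; obtain rfl := eq_of_heq hq
      exact connNew hh2 hr
    · obtain ⟨rfl, hq, rfl⟩ := plc_eq hh1; obtain rfl := eq_of_heq hq
      obtain ⟨-, hq2, -⟩ := plc_eq hh2; obtain rfl := eq_of_heq hq2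
      refine ⟨SimpleGraph.Walk.nil, ?_⟩
      intro z hz
      simp only [SimpleGraph.Walk.support_nil, List.mem_singleton] at hz
      exact ⟨_, by subst hz; exact hmw⟩
  · intro a b hab e he1 he2
    by_cases hai : a = i
    · subst hai
      have hbne : b ≠ a := hab.symm
      rw [eOf_ne T hbne] at he2
      rcases hBoth he1 with h | h
      · exact hS.disj hab e h he2
      · simp only [Set.mem_singleton_iff] at h
        exact he b (h ▸ he2)
    · rw [eOf_ne T hai] at he1
      by_cases hbi : b = i
      · subst hbi
        rcases hBoth he2 with h | h
        · exact hS.disj hab e he1 h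
        · simp only [Set.mem_singleton_iff] at h
          exact he a (h ▸ he1)
      · rw [eOf_ne T hbi] at he2
        exact hS.disj hab e he1 he2

section Counting

variable {κ : Cardinal.{u}}

theorem card_le_of_snd {S : PSt I W V} (A : Set V)
    (h : ∀ y ∈ A, ∃ p : Σ i : I, W i, (p, y) ∈ S) : #A ≤ #S := by
  choose p hp using h
  refine Cardinal.mk_le_of_injective (f := fun y : A => (⟨(p y y.2, y), hp y y.2⟩ : S)) ?_
  intro a b hab
  have := congrArg (fun q : S => (q : (Σ i : I, W i) × V).2) hab
  exact Subtype.ext this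

theorem fresh_comp (i : I) {S : PSt I W V} (hcard : #S < κ)
    (hcomp : κ ≤ #((T i).ConnectedComponent)) :
    ∃ t : W i, ∀ w : W i, (T i).Reachable w t → (⟨i, w⟩ : Σ i, W i) ∉ pdom S := by
  by_contra hcon
  push_neg at hcon
  choose w hw hp using hcon
  choose vv hv using hp
  have hinj : Function.Injective
      (fun c : (T i).ConnectedComponent => (⟨(⟨i, w c.out⟩, vv c.out), hv c.out⟩ : S)) := by
    intro c c' hcc
    have h2 : ((⟨i, w c.out⟩ : Σ i, W i), vv c.out) = ((⟨i, w c'.out⟩ : Σ i, W i), vv c'.out) :=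
      congrArg Subtype.val hcc
    obtain ⟨-, hq, -⟩ := plc_eq h2
    obtain hww := eq_of_heq hq
    calc c = (T i).connectedComponentMk c.out := c.out_eq.symm
    _ = (T i).connectedComponentMk (w c.out) := (SimpleGraph.ConnectedComponent.sound (hw c.out)).symm
    _ = (T i).connectedComponentMk (w c'.out) := by rw [hww]
    _ = (T i).connectedComponentMk c'.out := SimpleGraph.ConnectedComponent.sound (hw c'.out)
    _ = c' := c'.out_eq
  exact absurd (hcomp.trans (Cardinal.mk_le_of_injective hinj)) (not_le.2 hcard)

theorem fresh_vtx (i : I) {S : PSt I W V} (hcard : #S < κ) (hV : κ ≤ #V) :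
    ∃ v : V, v ∉ pim S i := by
  by_contra hcon
  push_neg at hcon
  have hsub : (Set.univ : Set V) ⊆ pim S i := fun v _ => hcon v
  have h1 : #V ≤ #(pim S i) := by
    simpa using Cardinal.mk_le_mk_of_subset hsub
  have h2 : #(pim S i) ≤ #S :=
    card_le_of_snd _ (fun y hy => by obtain ⟨ww, hww⟩ := hy; exact ⟨⟨i, ww⟩, hww⟩)
  exact absurd ((hV.trans h1).trans h2) (not_le.2 hcard)

theorem badIdx_card (u : V) {S : PSt I W V} : #{i : I | u ∈ pim S i} ≤ #S := by
  have h : ∀ i ∈ {i : I | u ∈ pim S i}, ∃ p : (Σ i : I, W i) × V, p ∈ S ∧ p.1.1 = i ∧ p.2 = u := by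
    rintro i ⟨ww, hww⟩
    exact ⟨(⟨i, ww⟩, u), hww, rfl, rfl⟩
  choose p hp h1 h2 using h
  refine Cardinal.mk_le_of_injective (f := fun i : {i : I | u ∈ pim S i} =>
    (⟨p i i.2, hp i i.2⟩ : S)) ?_
  intro a b hab
  have := congrArg (fun q : S => (q : (Σ i : I, W i) × V).1.1) hab
  apply Subtype.ext
  rw [← h1 a a.2, ← h1 b b.2]
  exact this

theorem fresh_idx {S : PSt I W V} (hκ : ℵ₀ ≤ κ) (hcard : #S < κ) (hI : κ ≤ #I) (u u' : V) :
    ∃ i : I, u ∉ pim S i ∧ u' ∉ pim S i := by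
  by_contra hcon
  push_neg at hcon
  have hsub : (Set.univ : Set I) ⊆ {i : I | u ∈ pim S i} ∪ {i : I | u' ∈ pim S i} := by
    intro i _
    by_cases h : u ∈ pim S i
    · exact Or.inl h
    · exact Or.inr (hcon i h)
  have h1 : #I ≤ #({i : I | u ∈ pim S i} ∪ {i : I | u' ∈ pim S i} : Set I) := by
    simpa using Cardinal.mk_le_mk_of_subset hsub
  have h2 := (Cardinal.mk_union_le {i : I | u ∈ pim S i} {i : I | u' ∈ pim S i})
  have h3 : #({i : I | u ∈ pim S i} : Set I) + #({i : I | u' ∈ pim S i} : Set I) < κ :=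
    Cardinal.add_lt_of_lt hκ (lt_of_le_of_lt (badIdx_card u) hcard)
      (lt_of_le_of_lt (badIdx_card u') hcard)
  exact absurd (hI.trans (h1.trans h2)) (not_le.2 h3)

theorem fresh_host {S : PSt I W V} (hκ : ℵ₀ ≤ κ) (hcard : #S < κ)
    (hreg : G.CardRegular κ) (i : I) (v' : V) :
    ∃ y : V, G.Adj v' y ∧ y ∉ pim S i ∧ ∀ j, s(v', y) ∉ eOf T S j := by
  by_contra hcon
  push_neg at hcon
  have hsub : G.neighborSet v' ⊆ pim S i ∪ {y : V | ∃ j, s(v', y) ∈ eOf T S j} := by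
    intro y hy
    by_cases h : y ∈ pim S i
    · exact Or.inl h
    · obtain ⟨j, hj⟩ := hcon y hy h
      exact Or.inr ⟨j, hj⟩
  have hB2 : #({y : V | ∃ j, s(v', y) ∈ eOf T S j} : Set V) ≤ #S := by
    refine card_le_of_snd _ ?_
    rintro y ⟨j, w1, w1', v1, v1', ha, hm1, hm2, hee⟩
    rcases (Sym2.eq_iff.1 hee.symm) with ⟨rfl, rfl⟩ | ⟨rfl, rfl⟩
    · exact ⟨⟨j, w1'⟩, hm2⟩
    · exact ⟨⟨j, w1⟩, hm1⟩
  have hB1 : #(pim S i) ≤ #S :=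
    card_le_of_snd _ (fun y hy => by obtain ⟨ww, hww⟩ := hy; exact ⟨⟨i, ww⟩, hww⟩)
  have h1 : κ ≤ #(pim S i ∪ {y : V | ∃ j, s(v', y) ∈ eOf T S j} : Set V) := by
    rw [← hreg v']
    exact Cardinal.mk_le_mk_of_subset hsub
  have h3 : #(pim S i) + #({y : V | ∃ j, s(v', y) ∈ eOf T S j} : Set V) < κ :=
    Cardinal.add_lt_of_lt hκ (lt_of_le_of_lt hB1 hcard) (lt_of_le_of_lt hB2 hcard)
  exact absurd (h1.trans (Cardinal.mk_union_le _ _)) (not_le.2 h3)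

end Counting

variable {κ : Cardinal.{u}}

theorem ext_exists (hκ : ℵ₀ ≤ κ) (hI : κ ≤ #I) (hV : κ ≤ #V)
    (hac : ∀ i, (T i).IsAcyclic) (hni : ∀ i, (T i).NoIsolatedVerts)
    (hcomp : ∀ i, κ ≤ #((T i).ConnectedComponent)) (hreg : G.CardRegular κ)
    {S : PSt I W V} (hS : GoodS T G S) (hcard : #S < κ) (r : Req I W V) :
    ∃ X, Ext T G S r X := by
  classical
  cases r with
  | edge u v =>
    by_cases hA : G.Adj u v
    · by_cases hE : ∃ j, s(u, v) ∈ eOf T S j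
      · refine ⟨∅, Set.finite_empty, by rwa [Set.union_empty], ?_⟩
        show G.Adj u v → ∃ j, s(u, v) ∈ eOf T (S ∪ ∅) j
        rw [Set.union_empty]
        exact fun _ => hE
      · obtain ⟨i, hu, hv2⟩ := fresh_idx hκ hcard hI u v
        obtain ⟨t, ht⟩ := fresh_comp T i hcard (hcomp i)
        obtain ⟨t', hadj⟩ := hni i t
        push_neg at hE
        refine ⟨{((⟨i, t⟩ : Σ i, W i), u), ((⟨i, t'⟩ : Σ i, W i), v)},
          (Set.finite_singleton _).insert _,
          good_seed2 T G hS hadj ht hu hv2 hA hE, ?_⟩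
        exact fun _ => ⟨i, t, t', u, v, hadj, Or.inr (Or.inl rfl), Or.inr (Or.inr rfl), rfl⟩
    · exact ⟨∅, Set.finite_empty, by rwa [Set.union_empty], fun h => absurd h hA⟩
  | cover i v =>
    by_cases hv : v ∈ pim S i
    · refine ⟨∅, Set.finite_empty, by rwa [Set.union_empty], ?_⟩
      show v ∈ pim (S ∪ ∅) i
      rw [Set.union_empty]
      exact hv
    · obtain ⟨t, ht⟩ := fresh_comp T i hcard (hcomp i)
      exact ⟨{((⟨i, t⟩ : Σ i, W i), v)}, Set.finite_singleton _, good_seed T G hS ht hv,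
        ⟨t, Or.inr rfl⟩⟩
  | place i t =>
    by_cases hp : (⟨i, t⟩ : Σ i, W i) ∈ pdom S
    · refine ⟨∅, Set.finite_empty, by rwa [Set.union_empty], Or.inl ?_⟩
      show (⟨i, t⟩ : Σ i, W i) ∈ pdom (S ∪ ∅)
      rw [Set.union_empty]
      exact hp
    · by_cases h2 : ∃ w0 : W i, (T i).Reachable w0 t ∧ (⟨i, w0⟩ : Σ i, W i) ∈ pdom S
      · set D := {n : ℕ | ∃ w0 : W i, (T i).Reachable w0 t ∧ (⟨i, w0⟩ : Σ i, W i) ∈ pdom S ∧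
          (T i).dist w0 t = n} with hD
        have hDne : D.Nonempty := by
          obtain ⟨w0, h1, hmem⟩ := h2
          exact ⟨_, w0, h1, hmem, rfl⟩
        obtain ⟨w', hw'r, hw'p, hw'd⟩ := Nat.sInf_mem hDne
        have hwt : w' ≠ t := fun h => hp (h ▸ hw'p)
        obtain ⟨p, hplen⟩ := hw'r.exists_walk_length_eq_dist
        obtain ⟨x, hadj, q, rfl⟩ := SimpleGraph.Walk.exists_eq_cons_of_ne hwt p
        have hlen : q.length + 1 = sInf D := by
          rw [← hw'd, ← hplen]
          simp [SimpleGraph.Walk.length_cons]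
        have hxd : (T i).dist x t ≤ q.length := SimpleGraph.dist_le q
        have hxr : (T i).Reachable x t := q.reachable
        have hxnp : (⟨i, x⟩ : Σ i, W i) ∉ pdom S := by
          intro hmem
          have hle : sInf D ≤ (T i).dist x t := Nat.sInf_le ⟨x, hxr, hmem, rfl⟩
          omega
        obtain ⟨v', hv'⟩ := hw'p
        obtain ⟨y, hGy, hy, he⟩ := fresh_host T G hκ hcard hreg i v'
        refine ⟨{((⟨i, x⟩ : Σ i, W i), y)}, Set.finite_singleton _,
          good_extend T G hS (hac i) hxnp hv' hadj hy hGy he,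
          Or.inr ⟨x, hxr, ⟨y, Or.inr rfl⟩, ?_⟩⟩
        intro w'' hw''p hw''r
        have h1 : sInf D ≤ (T i).dist w'' t := Nat.sInf_le ⟨w'', hw''r, hw''p, rfl⟩
        omega
      · push_neg at h2
        obtain ⟨v, hv⟩ := fresh_vtx i hcard hV
        exact ⟨{((⟨i, t⟩ : Σ i, W i), v)}, Set.finite_singleton _, good_seed T G hS h2 hv,
          Or.inl ⟨v, Or.inr rfl⟩⟩

section Build

variable [LinearOrder I] [WellFoundedLT I]

open scoped Classical in
noncomputable def stepS (S : PSt I W V) (r : Req I W V) : PSt I W V :=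
  S ∪ (if h : ∃ X, Ext T G S r X then h.choose else ∅)

theorem subset_stepS (S : PSt I W V) (r : Req I W V) : S ⊆ stepS T G S r :=
  Set.subset_union_left

variable (req : I → Req I W V)

noncomputable def bld : I → PSt I W V := fun α =>
  WellFounded.fix wellFounded_lt
    (fun α rec => stepS T G (⋃ β : Set.Iio α, rec β.1 β.2) (req α)) α

noncomputable def UU (α : I) : PSt I W V := ⋃ β : Set.Iio α, bld T G req β.1

theorem bld_eq (α : I) : bld T G req α = stepS T G (UU T G req α) (req α) := by
  show WellFounded.fix _ _ _ = _
  rw [WellFounded.fix_eq]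
  rfl

theorem UU_subset (α : I) : UU T G req α ⊆ bld T G req α := by
  rw [bld_eq]
  exact subset_stepS T G _ _

theorem bld_subset_UU {β α : I} (h : β < α) : bld T G req β ⊆ UU T G req α :=
  Set.subset_iUnion (fun b : Set.Iio α => bld T G req b.1) ⟨β, h⟩

theorem bld_mono {β α : I} (h : β ≤ α) : bld T G req β ⊆ bld T G req α := by
  rcases lt_or_eq_of_le h with h | h
  · exact (bld_subset_UU T G req h).trans (UU_subset T G req α)
  · rw [h]

theorem UU_props (α : I)
    (hIH : ∀ β, β < α → GoodS T G (bld T G req β) ∧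
      #(bld T G req β) ≤ ℵ₀ ⊔ #(Set.Iio β) ∧ ((Set.Iio β).Finite → (bld T G req β).Finite)) :
    GoodS T G (UU T G req α) ∧ #(UU T G req α) ≤ ℵ₀ ⊔ #(Set.Iio α) ∧
      ((Set.Iio α).Finite → (UU T G req α).Finite) := by
  refine ⟨?_, ?_, ?_⟩
  · refine goodS_iUnion T G _ ?_ ?_
    · rintro ⟨a, ha⟩ ⟨b, hb⟩
      rcases le_total a b with h | h
      · exact ⟨⟨b, hb⟩, bld_mono T G req h, subset_rfl⟩
      · exact ⟨⟨a, ha⟩, subset_rfl, bld_mono T G req h⟩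
    · exact fun ⟨b, hb⟩ => (hIH b hb).1
  · set c := ℵ₀ ⊔ #(Set.Iio α) with hc
    have hac : ℵ₀ ≤ c := le_sup_left
    calc #(UU T G req α) ≤ Cardinal.sum fun β : Set.Iio α => #(bld T G req β.1) :=
        Cardinal.mk_iUnion_le_sum_mk
    _ ≤ Cardinal.sum fun _ : Set.Iio α => c := by
        refine Cardinal.sum_le_sum _ _ ?_
        rintro ⟨b, hb⟩
        refine ((hIH b hb).2.1).trans (sup_le_sup le_rfl ?_)
        exact Cardinal.mk_le_mk_of_subset (Set.Iio_subset_Iio hb.le)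
    _ = #(Set.Iio α) * c := Cardinal.sum_const' _ _
    _ ≤ c * c := by
        exact mul_le_mul' le_sup_right le_rfl
    _ = c := Cardinal.mul_eq_self hac
  · intro hfin
    have : Finite (Set.Iio α) := hfin.to_subtype
    refine Set.finite_iUnion ?_
    rintro ⟨b, hb⟩
    exact (hIH b hb).2.2 (hfin.subset (Set.Iio_subset_Iio hb.le))

theorem bld_inv (α : I) : GoodS T G (bld T G req α) ∧
    #(bld T G req α) ≤ ℵ₀ ⊔ #(Set.Iio α) ∧ ((Set.Iio α).Finite → (bld T G req α).Finite) := by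
  induction α using WellFoundedLT.induction with
  | _ α hIH =>
    obtain ⟨hg, hcard, hfin⟩ := UU_props T G req α hIH
    rw [bld_eq]
    unfold stepS
    split_ifs with h
    · obtain ⟨hXfin, hXg, -⟩ := h.choose_spec
      refine ⟨hXg, ?_, ?_⟩
      · calc #(UU T G req α ∪ h.choose : PSt I W V) ≤ #(UU T G req α) + #(h.choose : PSt I W V) :=
            Cardinal.mk_union_le _ _
        _ ≤ (ℵ₀ ⊔ #(Set.Iio α)) + (ℵ₀ ⊔ #(Set.Iio α)) := by
            refine add_le_add hcard (le_trans ?_ le_sup_left)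
            exact hXfin.countable.le_aleph0
        _ = ℵ₀ ⊔ #(Set.Iio α) := Cardinal.add_eq_self le_sup_left
      · exact fun hf => ((hfin hf).union hXfin)
    · rw [Set.union_empty]
      exact ⟨hg, hcard, hfin⟩

end Build

section Run

variable [LinearOrder I] [WellFoundedLT I] (req : I → Req I W V) {κ : Cardinal.{u}}

theorem bld_post (hκ : ℵ₀ ≤ κ) (hI : κ ≤ #I) (hV : κ ≤ #V)
    (hac : ∀ i, (T i).IsAcyclic) (hni : ∀ i, (T i).NoIsolatedVerts)
    (hcomp : ∀ i, κ ≤ #((T i).ConnectedComponent)) (hreg : G.CardRegular κ)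
    (hsm : ∀ α : I, #(Set.Iio α) < κ) (α : I) :
    Post T G (UU T G req α) (bld T G req α) (req α) := by
  obtain ⟨hg, hcard, hfin⟩ := UU_props T G req α (fun β _ => bld_inv T G req β)
  have hlt : #(UU T G req α) < κ := by
    by_cases hf : (Set.Iio α).Finite
    · exact lt_of_lt_of_le ((hfin hf).lt_aleph0) hκ
    · have h8 : ℵ₀ ≤ #(Set.Iio α) := Cardinal.infinite_iff.1 (Set.infinite_coe_iff.2 hf)
      calc #(UU T G req α) ≤ ℵ₀ ⊔ #(Set.Iio α) := hcard
      _ = #(Set.Iio α) := sup_eq_right.2 h8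
      _ < κ := hsm α
  have hex := ext_exists T G hκ hI hV hac hni hcomp hreg hg hlt (req α)
  rw [bld_eq]
  unfold stepS
  rw [dif_pos hex]
  exact hex.choose_spec.2.2

noncomputable def Sfin : PSt I W V := ⋃ α : I, bld T G req α

theorem bld_subset_Sfin (α : I) : bld T G req α ⊆ Sfin T G req :=
  Set.subset_iUnion (bld T G req) α

theorem good_Sfin : GoodS T G (Sfin T G req) := by
  refine goodS_iUnion T G _ ?_ (fun α => (bld_inv T G req α).1)
  intro a b
  rcases le_total a b with h | h
  · exact ⟨b, bld_mono T G req h, subset_rfl⟩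
  · exact ⟨a, subset_rfl, bld_mono T G req h⟩


theorem place_total [Nonempty I]
    (hreq : ∀ (r : Req I W V) (α : I), ∃ β, α < β ∧ req β = r) (hκ : ℵ₀ ≤ κ) (hI : κ ≤ #I) (hV : κ ≤ #V)
    (hac : ∀ i, (T i).IsAcyclic) (hni : ∀ i, (T i).NoIsolatedVerts)
    (hcomp : ∀ i, κ ≤ #((T i).ConnectedComponent)) (hreg : G.CardRegular κ)
    (hsm : ∀ α : I, #(Set.Iio α) < κ) (i : I) (t : W i) :
    (⟨i, t⟩ : Σ i, W i) ∈ pdom (Sfin T G req) := by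
  have key : ∀ n : ℕ, ∀ α : I, ∀ w0 : W i, (T i).Reachable w0 t →
      (⟨i, w0⟩ : Σ i, W i) ∈ pdom (bld T G req α) → (T i).dist w0 t ≤ n →
      (⟨i, t⟩ : Σ i, W i) ∈ pdom (Sfin T G req) := by
    intro n
    induction n with
    | zero =>
      intro α w0 hr hp hd
      have h0 : (T i).dist w0 t = 0 := Nat.le_zero.1 hd
      have : w0 = t := hr.dist_eq_zero_iff.1 h0
      exact pdom_mono (bld_subset_Sfin T G req α) (this ▸ hp)
    | succ n ih =>
      intro α w0 hr hp hd
      obtain ⟨β, hαβ, hreqβ⟩ := hreq (.place i t) α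
      have hpost := bld_post T G req hκ hI hV hac hni hcomp hreg hsm β
      rw [hreqβ] at hpost
      rcases hpost with hL | ⟨w1, hw1r, hw1p, hw1min⟩
      · exact pdom_mono (bld_subset_Sfin T G req β) hL
      · have hlt : (T i).dist w1 t < (T i).dist w0 t :=
          hw1min w0 (pdom_mono (bld_subset_UU T G req hαβ) hp) hr
        exact ih β w1 hw1r hw1p (by omega)
  obtain ⟨β, -, hreqβ⟩ := hreq (.place i t) (Classical.arbitrary I)
  have hpost := bld_post T G req hκ hI hV hac hni hcomp hreg hsm β
  rw [hreqβ] at hpost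
  rcases hpost with hL | ⟨w1, hw1r, hw1p, -⟩
  · exact pdom_mono (bld_subset_Sfin T G req β) hL
  · exact key ((T i).dist w1 t) β w1 hw1r hw1p le_rfl

theorem cover_total [Nonempty I]
    (hreq : ∀ (r : Req I W V) (α : I), ∃ β, α < β ∧ req β = r) (hκ : ℵ₀ ≤ κ) (hI : κ ≤ #I) (hV : κ ≤ #V)
    (hac : ∀ i, (T i).IsAcyclic) (hni : ∀ i, (T i).NoIsolatedVerts)
    (hcomp : ∀ i, κ ≤ #((T i).ConnectedComponent)) (hreg : G.CardRegular κ)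
    (hsm : ∀ α : I, #(Set.Iio α) < κ) (i : I) (v : V) :
    v ∈ pim (Sfin T G req) i := by
  obtain ⟨β, -, hreqβ⟩ := hreq (.cover i v) (Classical.arbitrary I)
  have hpost := bld_post T G req hκ hI hV hac hni hcomp hreg hsm β
  rw [hreqβ] at hpost
  exact pim_mono (bld_subset_Sfin T G req β) i hpost

theorem edge_total [Nonempty I]
    (hreq : ∀ (r : Req I W V) (α : I), ∃ β, α < β ∧ req β = r) (hκ : ℵ₀ ≤ κ) (hI : κ ≤ #I) (hV : κ ≤ #V)
    (hac : ∀ i, (T i).IsAcyclic) (hni : ∀ i, (T i).NoIsolatedVerts)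
    (hcomp : ∀ i, κ ≤ #((T i).ConnectedComponent)) (hreg : G.CardRegular κ)
    (hsm : ∀ α : I, #(Set.Iio α) < κ) {u v : V} (huv : G.Adj u v) :
    ∃ j, s(u, v) ∈ eOf T (Sfin T G req) j := by
  obtain ⟨β, -, hreqβ⟩ := hreq (.edge u v) (Classical.arbitrary I)
  have hpost := bld_post T G req hκ hI hV hac hni hcomp hreg hsm β
  rw [hreqβ] at hpost
  obtain ⟨j, hj⟩ := hpost huv
  exact ⟨j, eOf_mono T (bld_subset_Sfin T G req β) j hj⟩

end Run

section Assemble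

theorem assemble {S : PSt I W V} (hS : GoodS T G S)
    (htot : ∀ (i : I) (t : W i), (⟨i, t⟩ : Σ i, W i) ∈ pdom S)
    (hsurj : ∀ (i : I) (v : V), v ∈ pim S i)
    (hcov : ∀ {u v : V}, G.Adj u v → ∃ j, s(u, v) ∈ eOf T S j) :
    ∃ F : I → SimpleGraph V, G.IsFactorization F ∧ ∀ i, Nonempty (F i ≃g T i) := by
  classical
  refine ⟨fun i => SimpleGraph.fromEdgeSet (eOf T S i), ⟨?_, ?_, ?_⟩, ?_⟩
  · intro i a b hab
    rw [SimpleGraph.fromEdgeSet_adj] at hab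
    obtain ⟨⟨w, w', v, v', ha, h1, h2, hee⟩, hne⟩ := hab
    rcases Sym2.eq_iff.1 hee with ⟨rfl, rfl⟩ | ⟨rfl, rfl⟩
    · exact hS.adjP ha h1 h2
    · exact (hS.adjP ha h1 h2).symm
  · intro i j hij
    rw [Set.disjoint_left]
    intro e he1 he2
    rw [SimpleGraph.edgeSet_fromEdgeSet] at he1 he2
    exact hS.disj hij e he1.1 he2.1
  · ext e
    constructor
    · intro he
      obtain ⟨i, hei⟩ := Set.mem_iUnion.1 he
      rw [SimpleGraph.edgeSet_fromEdgeSet] at hei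
      obtain ⟨⟨w, w', v, v', ha, h1, h2, rfl⟩, -⟩ := hei
      exact (G.mem_edgeSet).2 (hS.adjP ha h1 h2)
    · intro he
      induction e with
      | _ u v =>
        have huv : G.Adj u v := (G.mem_edgeSet).1 he
        obtain ⟨j, hj⟩ := hcov huv
        refine Set.mem_iUnion.2 ⟨j, ?_⟩
        rw [SimpleGraph.edgeSet_fromEdgeSet]
        exact ⟨hj, by simp [huv.ne]⟩
  · intro i
    choose f hf using htot i
    have hinj : Function.Injective f := fun a b h => hS.inj (hf a) (h ▸ hf b)
    have hsur : Function.Surjective f := by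
      intro v
      obtain ⟨w, hw⟩ := hsurj i v
      exact ⟨w, hS.func (hf w) hw⟩
    have hiff : ∀ a b : W i, (SimpleGraph.fromEdgeSet (eOf T S i)).Adj (f a) (f b) ↔
        (T i).Adj a b := by
      intro a b
      constructor
      · intro hab
        rw [SimpleGraph.fromEdgeSet_adj] at hab
        obtain ⟨⟨w, w', v, v', ha, h1, h2, hee⟩, hne⟩ := hab
        rcases Sym2.eq_iff.1 hee.symm with ⟨hv1, hv2⟩ | ⟨hv1, hv2⟩
        · rw [hS.inj (hf a) (hv1 ▸ h1), hS.inj (hf b) (hv2 ▸ h2)]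
          exact ha
        · rw [hS.inj (hf a) (hv2 ▸ h2), hS.inj (hf b) (hv1 ▸ h1)]
          exact ha.symm
      · intro hab
        rw [SimpleGraph.fromEdgeSet_adj]
        exact ⟨⟨a, b, f a, f b, hab, hf a, hf b, rfl⟩, (hS.adjP hab (hf a) (hf b)).ne⟩
    exact ⟨((⟨Equiv.ofBijective f ⟨hinj, hsur⟩, fun {a b} => hiff a b⟩ :
      T i ≃g SimpleGraph.fromEdgeSet (eOf T S i))).symm⟩

end Assemble

section Cards

variable {κ : Cardinal.{u}}

theorem card_V_ge (hconn : G.Connected) (hreg : G.CardRegular κ) : κ ≤ #V := by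
  obtain ⟨v₀⟩ := hconn.nonempty
  rw [← hreg v₀]
  exact Cardinal.mk_set_le _

theorem card_V_le (hκ : ℵ₀ ≤ κ) (hconn : G.Connected) (hreg : G.CardRegular κ) : #V ≤ κ := by
  obtain ⟨v₀⟩ := hconn.nonempty
  set B : ℕ → Set V := fun n => {u | G.dist v₀ u ≤ n} with hBdef
  have hB : ∀ n, #(B n) ≤ κ := by
    intro n
    induction n with
    | zero =>
      have hsub : B 0 ⊆ {v₀} := by
        intro u hu
        have h0 : G.dist v₀ u = 0 := Nat.le_zero.1 hu
        have := (hconn.dist_eq_zero_iff).1 h0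
        simp [this.symm]
      calc #(B 0) ≤ #({v₀} : Set V) := Cardinal.mk_le_mk_of_subset hsub
      _ = 1 := Cardinal.mk_singleton v₀
      _ ≤ κ := le_trans Cardinal.one_le_aleph0 hκ
    | succ n ih =>
      have hsub : B (n + 1) ⊆ B n ∪ ⋃ x : B n, G.neighborSet x.1 := by
        intro u hu
        by_cases hle : G.dist v₀ u ≤ n
        · exact Or.inl hle
        · have hd : G.dist v₀ u = n + 1 := le_antisymm hu (by omega)
          have hne : u ≠ v₀ := by
            intro h
            rw [h, hconn.dist_eq_zero_iff.2 rfl] at hd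
            omega
          obtain ⟨p, hp⟩ := (hconn v₀ u).exists_walk_length_eq_dist
          obtain ⟨x, hadj, q, hq⟩ := SimpleGraph.Walk.exists_eq_cons_of_ne hne p.reverse
          have hql : q.length = n := by
            have := congrArg SimpleGraph.Walk.length hq
            rw [SimpleGraph.Walk.length_reverse, hp, hd] at this
            simp [SimpleGraph.Walk.length_cons] at this
            omega
          have hx : x ∈ B n := by
            show G.dist v₀ x ≤ n
            rw [SimpleGraph.dist_comm]
            exact hql ▸ SimpleGraph.dist_le q
          refine Or.inr (Set.mem_iUnion.2 ⟨⟨x, hx⟩, ?_⟩)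
          exact hadj.symm
      calc #(B (n + 1)) ≤ #(B n ∪ ⋃ x : B n, G.neighborSet x.1 : Set V) :=
          Cardinal.mk_le_mk_of_subset hsub
      _ ≤ #(B n) + #(⋃ x : B n, G.neighborSet x.1 : Set V) := Cardinal.mk_union_le _ _
      _ ≤ κ + Cardinal.sum (fun x : B n => #(G.neighborSet x.1)) :=
          add_le_add ih Cardinal.mk_iUnion_le_sum_mk
      _ = κ + Cardinal.sum (fun _ : B n => κ) := by
          congr 1
          exact congrArg Cardinal.sum (funext fun x => hreg x.1)
      _ = κ + #(B n) * κ := by rw [Cardinal.sum_const']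
      _ ≤ κ + κ * κ := add_le_add le_rfl (mul_le_mul' ih le_rfl)
      _ = κ := by rw [Cardinal.mul_eq_self hκ, Cardinal.add_eq_self hκ]
  have hUV : (Set.univ : Set V) ⊆ ⋃ n : ULift.{u} ℕ, B n.down := by
    intro u _
    refine Set.mem_iUnion.2 ⟨ULift.up (G.dist v₀ u), ?_⟩
    show G.dist v₀ u ≤ G.dist v₀ u
    exact le_rfl
  calc #V = #(Set.univ : Set V) := Cardinal.mk_univ.symm
  _ ≤ #(⋃ n : ULift.{u} ℕ, B n.down : Set V) := Cardinal.mk_le_mk_of_subset hUV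
  _ ≤ Cardinal.sum (fun n : ULift.{u} ℕ => #(B n.down)) := Cardinal.mk_iUnion_le_sum_mk
  _ ≤ Cardinal.sum (fun _ : ULift.{u} ℕ => κ) := Cardinal.sum_le_sum _ _ (fun n => hB n.down)
  _ = #(ULift.{u} ℕ) * κ := Cardinal.sum_const' _ _
  _ = ℵ₀ * κ := by simp
  _ ≤ κ := by
      rw [Cardinal.mul_eq_max le_rfl hκ]
      exact max_le hκ le_rfl

theorem card_W_le (hκ : ℵ₀ ≤ κ) (i : I) (hcomp : #((T i).ConnectedComponent) = κ)
    (hord : ∀ c : (T i).ConnectedComponent, #c.supp ≤ κ) : #(W i) ≤ κ := by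
  have e1 : (Σ c : (T i).ConnectedComponent,
      {w : W i // (T i).connectedComponentMk w = c}) ≃ W i :=
    Equiv.sigmaFiberEquiv _
  have e2 : ∀ c : (T i).ConnectedComponent,
      #{w : W i // (T i).connectedComponentMk w = c} = #c.supp :=
    fun c => Cardinal.mk_congr (Equiv.subtypeEquivRight
      (fun v => (SimpleGraph.ConnectedComponent.mem_supp_iff c v).symm))
  calc #(W i) = #(Σ c : (T i).ConnectedComponent,
      {w : W i // (T i).connectedComponentMk w = c}) := (Cardinal.mk_congr e1).symm
  _ = Cardinal.sum (fun c : (T i).ConnectedComponent =>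
      #{w : W i // (T i).connectedComponentMk w = c}) := Cardinal.mk_sigma _
  _ ≤ Cardinal.sum (fun _ : (T i).ConnectedComponent => κ) :=
      Cardinal.sum_le_sum _ _ (fun c => (e2 c).le.trans (hord c))
  _ = #((T i).ConnectedComponent) * κ := Cardinal.sum_const' _ _
  _ = κ * κ := by rw [hcomp]
  _ ≤ κ := le_of_eq (Cardinal.mul_eq_self hκ)

theorem card_req_le (hκ : ℵ₀ ≤ κ) (hV : #V ≤ κ) (hI : #I ≤ κ)
    (hW : ∀ i, #(W i) ≤ κ) : #(Req I W V) ≤ κ := by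
  have hinj : Function.Injective (fun r : Req I W V =>
      (match r with
        | .edge u v => Sum.inl (u, v)
        | .cover i v => Sum.inr (Sum.inl (i, v))
        | .place i t => Sum.inr (Sum.inr ⟨i, t⟩) :
        (V × V) ⊕ ((I × V) ⊕ (Σ i : I, W i)))) := by
    intro a b h
    cases a <;> cases b <;> simp_all
  have hVV : #(V × V) ≤ κ := by
    rw [Cardinal.mk_prod]
    simp only [Cardinal.lift_id]
    calc #V * #V ≤ κ * κ := mul_le_mul' hV hV
    _ = κ := Cardinal.mul_eq_self hκ
  have hIV : #(I × V) ≤ κ := by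
    rw [Cardinal.mk_prod]
    simp only [Cardinal.lift_id]
    calc #I * #V ≤ κ * κ := mul_le_mul' hI hV
    _ = κ := Cardinal.mul_eq_self hκ
  have hSig : #(Σ i : I, W i) ≤ κ := by
    rw [Cardinal.mk_sigma]
    calc Cardinal.sum (fun i : I => #(W i)) ≤ Cardinal.sum (fun _ : I => κ) :=
        Cardinal.sum_le_sum _ _ hW
    _ = #I * κ := Cardinal.sum_const' _ _
    _ ≤ κ * κ := mul_le_mul' hI le_rfl
    _ = κ := Cardinal.mul_eq_self hκ
  calc #(Req I W V) ≤ #((V × V) ⊕ ((I × V) ⊕ (Σ i : I, W i))) :=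
      Cardinal.mk_le_of_injective hinj
  _ ≤ κ := by
      rw [Cardinal.mk_sum, Cardinal.mk_sum]
      simp only [Cardinal.lift_id]
      calc #(V × V) + (#(I × V) + #(Σ i : I, W i)) ≤ κ + (κ + κ) :=
        add_le_add hVV (add_le_add hIV hSig)
      _ = κ := by rw [Cardinal.add_eq_self hκ, Cardinal.add_eq_self hκ]

end Cards

theorem req_enum [LinearOrder I] {κ : Cardinal.{u}} (hκ : ℵ₀ ≤ κ) (hI : #I = κ)
    (hsm : ∀ α : I, #(Set.Iio α) < κ) {R : Type u} [Nonempty R] (hR : #R ≤ κ) :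
    ∃ req : I → R, ∀ (r : R) (α : I), ∃ β, α < β ∧ req β = r := by
  classical
  have hRI : #R ≤ #I := hR.trans_eq hI.symm
  obtain ⟨emb⟩ := (Cardinal.le_def ..).1 hRI
  have hII : #(I × I) = #I := by
    rw [Cardinal.mk_prod]
    simp only [Cardinal.lift_id]
    rw [hI, Cardinal.mul_eq_self hκ]
  obtain ⟨p⟩ := Cardinal.eq.1 hII.symm
  refine ⟨fun α => Function.invFun emb (p α).2, ?_⟩
  intro r α
  by_contra hcon
  push_neg at hcon
  have hmem : ∀ γ : I, p.symm (γ, emb r) ≤ α := by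
    intro γ
    by_contra hgt
    push_neg at hgt
    refine hcon _ hgt ?_
    rw [Equiv.apply_symm_apply]
    exact Function.leftInverse_invFun emb.injective r
  have hinj : Function.Injective (fun γ : I => (⟨p.symm (γ, emb r), hmem γ⟩ : Set.Iic α)) := by
    intro a b h
    have h1 := congrArg Subtype.val h
    have h2 := p.symm.injective h1
    exact congrArg Prod.fst h2
  have h1 : #I ≤ #(Set.Iic α) := Cardinal.mk_le_of_injective hinj
  have h2 : #(Set.Iic α) ≤ #(Set.Iio α) + 1 := by
    refine le_trans (Cardinal.mk_le_mk_of_subset (t := insert α (Set.Iio α)) ?_)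
      Cardinal.mk_insert_le
    intro x hx
    rcases lt_or_eq_of_le (Set.mem_Iic.1 hx) with h | h
    · exact Set.mem_insert_of_mem _ h
    · exact h ▸ Set.mem_insert _ _
  have h3 : #(Set.Iio α) + 1 < κ :=
    Cardinal.add_lt_of_lt hκ (hsm α) (lt_of_lt_of_le Cardinal.one_lt_aleph0 hκ)
  exact absurd ((hI.symm.trans_le (h1.trans h2)).trans_lt h3) (lt_irrefl κ)

end Fact5

/-- Main theorem: every connected `κ`-regular graph admits a `T`-factorization for every
family `T` of `κ` forests without isolated vertices, each with `κ` components of order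
at most `κ`. -/


theorem stmt_5 (κ : Cardinal.{u}) (hκ : ℵ₀ ≤ κ)
    (W : κ.ord.ToType → Type u) (T : ∀ i, SimpleGraph (W i))
    (hac : ∀ i, (T i).IsAcyclic) (hni : ∀ i, (T i).NoIsolatedVerts)
    (hcomp : ∀ i, #((T i).ConnectedComponent) = κ)
    (hord : ∀ i (c : (T i).ConnectedComponent), #c.supp ≤ κ)
    {V : Type u} (G : SimpleGraph V) (hconn : G.Connected) (hreg : G.CardRegular κ) :
    ∃ F : κ.ord.ToType → SimpleGraph V, G.IsFactorization F ∧
      ∀ i, Nonempty (F i ≃g T i) := by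
  classical
  have hIcard : #(κ.ord.ToType) = κ := Cardinal.mk_ord_toType κ
  have hκ0 : κ ≠ 0 := (lt_of_lt_of_le Cardinal.aleph0_pos hκ).ne'
  haveI hNe : Nonempty κ.ord.ToType := Cardinal.mk_ne_zero_iff.1 (by rw [hIcard]; exact hκ0)
  have hVge : κ ≤ #V := Fact5.card_V_ge G hconn hreg
  have hVle : #V ≤ κ := Fact5.card_V_le G hκ hconn hreg
  have hW : ∀ i, #(W i) ≤ κ := fun i => Fact5.card_W_le T hκ i (hcomp i) (hord i)
  haveI hReqNe : Nonempty (Fact5.Req κ.ord.ToType W V) := by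
    obtain ⟨v₀⟩ := hconn.nonempty
    exact ⟨.edge v₀ v₀⟩
  have hsm : ∀ α : κ.ord.ToType, #(Set.Iio α) < κ := fun α => Cardinal.mk_Iio_ord_toType α
  have hReq : #(Fact5.Req κ.ord.ToType W V) ≤ κ := Fact5.card_req_le hκ hVle hIcard.le hW
  obtain ⟨req, hreq⟩ := Fact5.req_enum hκ hIcard hsm hReq
  have hcomp' : ∀ i, κ ≤ #((T i).ConnectedComponent) := fun i => (hcomp i).ge
  exact Fact5.assemble T G (Fact5.good_Sfin T G req)
    (fun i t => Fact5.place_total T G req hreq hκ hIcard.ge hVge hac hni hcomp' hreg hsm i t)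
    (fun i v => Fact5.cover_total T G req hreq hκ hIcard.ge hVge hac hni hcomp' hreg hsm i v)
    (fun {u v} h => Fact5.edge_total T G req hreq hκ hIcard.ge hVge hac hni hcomp' hreg hsm h)
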